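/- If C₋ and C₊ are red-ended coloured-intervals and B is a blue interval, then the red-content of the closure of C₋ + B + C₊ satisfies r(C₋ + B + C₊) ≤ 2·r(C₋) + 2·r(C₊). -/

import Mathlib

open scoped Classical

/-- A recolouring step: the configuration (list of lengths of monochromatic intervals,
with colours alternating, determined by the colour of the first interval) contains three
consecutive intervals of lengths `a`, `b`, `c`, and the middle one, being strictly shorter
than both neighbours, is recoloured, merging the three into one of length `a + b + c`. -/
structure Step where
  pre : List ℝ
  a : ℝ
  b : ℝ
  c : ℝ
  post : List ℝ

namespace Step

/-- The configuration before the recolouring step. -/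
def src (s : Step) : List ℝ := s.pre ++ s.a :: s.b :: s.c :: s.post

/-- The configuration after the recolouring step. -/
def tgt (s : Step) : List ℝ := s.pre ++ (s.a + s.b + s.c) :: s.post

/-- A step is valid if the middle interval is strictly shorter than both neighbours. -/
def Valid (s : Step) : Prop := s.b < s.a ∧ s.b < s.c

/-- The set of points (identifying a configuration with a partition of `(0, total length]`
into half-open intervals) that get recoloured by the step: the middle interval. -/
def middle (s : Step) : Set ℝ :=
  Set.Ioc (s.pre.sum + s.a) (s.pre.sum + s.a + s.b)

end Step

/-- `Reduces l steps m`: starting from configuration `l`, performing the given sequence of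
valid recolouring steps yields configuration `m`. -/
inductive Reduces : List ℝ → List Step → List ℝ → Prop
  | nil (l : List ℝ) : Reduces l [] l
  | cons (s : Step) (hs : s.Valid) {steps : List Step} {m : List ℝ} :
      Reduces s.tgt steps m → Reduces s.src (s :: steps) m

/-- A configuration is closed if no further recolouring is possible; a sequence of
recolourings ending in a closed configuration is complete. -/
def IsClosedConfig (l : List ℝ) : Prop := ∀ s : Step, s.Valid → s.src ≠ l

/-- The number of times the point `x` is recoloured during a sequence of steps. -/
noncomputable def recolourCount (steps : List Step) (x : ℝ) : ℕ :=
  (steps.filter fun s => decide (x ∈ s.middle)).length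

/-- Non-degeneracy: with `p_i` the boundary points (partial sums of the lengths),
no two gap-distances coincide, i.e. `p_j - p_i ≠ p_k - p_j` for `i < j < k`. -/
def Nondegenerate (l : List ℝ) : Prop :=
  ∀ i j k : ℕ, i < j → j < k → k ≤ l.length →
    (l.take j).sum - (l.take i).sum ≠ (l.take k).sum - (l.take j).sum

/-- For a red-ended configuration (a list of lengths of odd length, the intervals at even
indices being red and those at odd indices blue), the total length of the red intervals. -/
def redSum (l : List ℝ) : ℝ :=
  ∑ i ∈ Finset.range l.length, if i % 2 = 0 then l.getD i 0 else 0

namespace RedGlue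

/-- pair (even-index sum, odd-index sum) -/
def rso : List ℝ → ℝ × ℝ
  | [] => (0, 0)
  | a :: t => (a + (rso t).2, (rso t).1)

def rs (l : List ℝ) : ℝ := (rso l).1
def os (l : List ℝ) : ℝ := (rso l).2

@[simp] lemma rs_nil : rs ([] : List ℝ) = 0 := rfl
@[simp] lemma os_nil : os ([] : List ℝ) = 0 := rfl
@[simp] lemma rs_cons (a : ℝ) (t : List ℝ) : rs (a :: t) = a + os t := rfl
@[simp] lemma os_cons (a : ℝ) (t : List ℝ) : os (a :: t) = rs t := rfl

def oddSum (l : List ℝ) : ℝ :=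
  ∑ i ∈ Finset.range l.length, if i % 2 = 1 then l.getD i 0 else 0

lemma redSum_oddSum (l : List ℝ) : redSum l = rs l ∧ oddSum l = os l := by
  induction l with
  | nil => simp [redSum, oddSum]
  | cons a t ih =>
    constructor
    · unfold redSum
      rw [List.length_cons, Finset.sum_range_succ']
      simp only [List.getD_cons_succ, List.getD_cons_zero, Nat.succ_mod_two_eq_zero_iff]
      rw [rs_cons, ← ih.2]
      unfold oddSum
      simp
      try ring
    · unfold oddSum
      rw [List.length_cons, Finset.sum_range_succ']
      simp only [List.getD_cons_succ, List.getD_cons_zero, Nat.succ_mod_two_eq_one_iff]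
      rw [os_cons, ← ih.1]
      unfold redSum
      simp
      try ring

lemma redSum_eq_rs (l : List ℝ) : redSum l = rs l := (redSum_oddSum l).1

lemma rs_os_append (A B : List ℝ) :
    rs (A ++ B) = rs A + (if A.length % 2 = 0 then rs B else os B) ∧
    os (A ++ B) = os A + (if A.length % 2 = 0 then os B else rs B) := by
  induction A with
  | nil => simp
  | cons a A ih =>
    rcases Nat.mod_two_eq_zero_or_one A.length with h | h <;>
      constructor <;>
      simp [ih.1, ih.2, h, List.length_cons, Nat.succ_mod_two_eq_zero_iff,
        Nat.succ_mod_two_eq_one_iff] <;> ring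

lemma rs_os_nonneg (l : List ℝ) (h : ∀ x ∈ l, 0 ≤ x) : 0 ≤ rs l ∧ 0 ≤ os l := by
  induction l with
  | nil => simp
  | cons a t ih =>
    have ht := ih (fun x hx => h x (List.mem_cons_of_mem _ hx))
    have ha := h a List.mem_cons_self
    constructor <;> simp <;> linarith [ht.1, ht.2]

lemma reduces_trans {l m n : List ℝ} {s1 s2 : List Step}
    (h1 : Reduces l s1 m) (h2 : Reduces m s2 n) : Reduces l (s1 ++ s2) n := by
  induction h1 with
  | nil => simpa using h2
  | cons s hs h ih => exact Reduces.cons s hs (ih h2)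

lemma step_pos (s : Step) (h : ∀ x ∈ s.src, 0 < x) : ∀ x ∈ s.tgt, 0 < x := by
  have ha : 0 < s.a := h _ (by simp [Step.src])
  have hb : 0 < s.b := h _ (by simp [Step.src])
  have hc : 0 < s.c := h _ (by simp [Step.src])
  intro x hx
  simp only [Step.tgt, List.mem_append, List.mem_cons] at hx
  rcases hx with hx | hx | hx
  · exact h x (by simp [Step.src, hx])
  · subst hx; linarith
  · exact h x (by simp [Step.src, hx])

lemma reduces_pos {l m : List ℝ} {st : List Step} (h : Reduces l st m)
    (hp : ∀ x ∈ l, 0 < x) : ∀ x ∈ m, 0 < x := by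
  induction h with
  | nil => exact hp
  | cons s hs h ih => exact ih (step_pos s hp)

lemma step_len (s : Step) : s.tgt.length + 2 = s.src.length := by
  simp [Step.src, Step.tgt]
  omega

lemma reduces_length {l m : List ℝ} {st : List Step} (h : Reduces l st m) :
    m.length + 2 * st.length = l.length := by
  induction h with
  | nil => simp
  | cons s hs h ih =>
    have := step_len s
    simp only [List.length_cons]
    omega

lemma reduces_append (A B : List ℝ) {l m : List ℝ} {st : List Step}
    (h : Reduces l st m) : ∃ st', Reduces (A ++ l ++ B) st' (A ++ m ++ B) := by
  induction h with
  | nil l => exact ⟨[], Reduces.nil _⟩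
  | cons s hs h ih =>
    obtain ⟨st', h'⟩ := ih
    refine ⟨⟨A ++ s.pre, s.a, s.b, s.c, s.post ++ B⟩ :: st', ?_⟩
    have e1 : (⟨A ++ s.pre, s.a, s.b, s.c, s.post ++ B⟩ : Step).src = A ++ s.src ++ B := by
      simp [Step.src]
    have e2 : (⟨A ++ s.pre, s.a, s.b, s.c, s.post ++ B⟩ : Step).tgt = A ++ s.tgt ++ B := by
      simp [Step.tgt]
    have h'' := h'
    rw [← e2] at h''
    rw [← e1]
    exact Reduces.cons (⟨A ++ s.pre, s.a, s.b, s.c, s.post ++ B⟩ : Step) ⟨hs.1, hs.2⟩ h''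

lemma exists_closure (l : List ℝ) : ∃ st m, Reduces l st m ∧ IsClosedConfig m := by
  suffices H : ∀ n, ∀ l : List ℝ, l.length < n → ∃ st m, Reduces l st m ∧ IsClosedConfig m from
    H (l.length + 1) l (Nat.lt_succ_self _)
  intro n
  induction n with
  | zero => intro l hl; omega
  | succ n ih =>
    intro l hl
    by_cases hcl : IsClosedConfig l
    · exact ⟨[], l, Reduces.nil l, hcl⟩
    · unfold IsClosedConfig at hcl
      push_neg at hcl
      obtain ⟨s, hv, hsrc⟩ := hcl
      have hlen : s.tgt.length < n := by
        have h1 := step_len s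
        have : s.src.length = l.length := by rw [hsrc]
        omega
      obtain ⟨st, m, hr, hcm⟩ := ih s.tgt hlen
      exact ⟨s :: st, m, hsrc ▸ Reduces.cons s hv hr, hcm⟩



lemma confl_core (s₁ s₂ : Step) (h₁ : s₁.Valid) (h₂ : s₂.Valid) (hsrc : s₁.src = s₂.src)
    (hpos : ∀ x ∈ s₁.src, 0 < x) (hle : s₁.pre.length ≤ s₂.pre.length) :
    s₁.tgt = s₂.tgt ∨ ∃ u₁ u₂ : Step, u₁.Valid ∧ u₂.Valid ∧ u₁.src = s₁.tgt ∧
      u₂.src = s₂.tgt ∧ u₁.tgt = u₂.tgt := by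
  set p := s₁.pre.length with hp
  -- key decomposition
  have hpre : s₁.pre = s₂.pre.take p := by
    have h1 : s₁.src.take p = s₁.pre := List.take_left' rfl
    have h2 : s₂.src.take p = s₂.pre.take p := by
      unfold Step.src
      exact List.take_append_of_le_length hle
    rw [← h1, hsrc, h2]
  have hK : s₁.a :: s₁.b :: s₁.c :: s₁.post =
      s₂.pre.drop p ++ s₂.a :: s₂.b :: s₂.c :: s₂.post := by
    have h1 : s₁.src.drop p = s₁.a :: s₁.b :: s₁.c :: s₁.post := List.drop_left' rfl
    have h2 : s₂.src.drop p = s₂.pre.drop p ++ s₂.a :: s₂.b :: s₂.c :: s₂.post := by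
      unfold Step.src
      exact List.drop_append_of_le_length hle
    rw [← h1, hsrc, h2]
  have hpre2 : s₂.pre = s₁.pre ++ s₂.pre.drop p := by
    conv_lhs => rw [← List.take_append_drop p s₂.pre]
    rw [← hpre]
  have ha1 : 0 < s₁.a := hpos _ (by simp [Step.src])
  have hb1 : 0 < s₁.b := hpos _ (by simp [Step.src])
  have hpos2 : ∀ x ∈ s₂.src, 0 < x := by rw [← hsrc]; exact hpos
  have hb2 : 0 < s₂.b := hpos2 _ (by simp [Step.src])
  have hc2 : 0 < s₂.c := hpos2 _ (by simp [Step.src])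
  rcases ht : s₂.pre.drop p with _ | ⟨x, t⟩
  · -- d = 0 : same step
    rw [ht] at hK hpre2
    simp at hK hpre2
    left
    unfold Step.tgt
    rw [hpre2, hK.1, hK.2.1, hK.2.2.1, hK.2.2.2]
  rcases t with _ | ⟨y, t⟩
  · -- d = 1 : impossible
    rw [ht] at hK
    simp at hK
    exfalso
    have e1 : s₁.b = s₂.a := hK.2.1
    have e2 : s₁.c = s₂.b := hK.2.2.1
    have := h₁.2   -- s₁.b < s₁.c
    have := h₂.1   -- s₂.b < s₂.a
    linarith
  rcases t with _ | ⟨z, t⟩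
  · -- d = 2 : overlapping triples
    rw [ht] at hK hpre2
    simp at hK
    obtain ⟨ex, ey, ec, hpost⟩ := hK
    right
    refine ⟨⟨s₁.pre, s₁.a + s₁.b + s₁.c, s₂.b, s₂.c, s₂.post⟩,
           ⟨s₁.pre, s₁.a, s₁.b, s₂.a + s₂.b + s₂.c, s₂.post⟩, ?_, ?_, ?_, ?_, ?_⟩
    · constructor
      · show s₂.b < s₁.a + s₁.b + s₁.c
        have : s₂.b < s₂.a := h₂.1
        rw [← ec] at this
        linarith
      · exact h₂.2
    · constructor
      · exact h₁.1
      · show s₁.b < s₂.a + s₂.b + s₂.c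
        have : s₁.b < s₁.c := h₁.2
        rw [ec] at this
        linarith
    · show s₁.pre ++ _ = s₁.tgt
      unfold Step.tgt
      rw [hpost]
    · show s₁.pre ++ _ = s₂.tgt
      unfold Step.tgt
      rw [hpre2, ← ex, ← ey]
      simp
    · simp only [Step.tgt]
      have e : s₁.a + s₁.b + s₁.c + s₂.b + s₂.c = s₁.a + s₁.b + (s₂.a + s₂.b + s₂.c) := by
        rw [← ec]; ring
      rw [e]
  · -- d ≥ 3 : disjoint triples
    rw [ht] at hK hpre2
    simp at hK
    obtain ⟨ex, ey, ez, hpost⟩ := hK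
    right
    refine ⟨⟨s₁.pre ++ (s₁.a + s₁.b + s₁.c) :: t, s₂.a, s₂.b, s₂.c, s₂.post⟩,
           ⟨s₁.pre, s₁.a, s₁.b, s₁.c, t ++ (s₂.a + s₂.b + s₂.c) :: s₂.post⟩,
           h₂, h₁, ?_, ?_, ?_⟩
    · show (s₁.pre ++ _) ++ _ = s₁.tgt
      unfold Step.tgt
      rw [hpost]
      simp
    · show s₁.pre ++ _ = s₂.tgt
      unfold Step.tgt
      rw [hpre2, ← ex, ← ey, ← ez]
      simp
    · simp only [Step.tgt]
      simp

lemma nf_unique_aux : ∀ n, ∀ l : List ℝ, l.length < n → (∀ x ∈ l, 0 < x) →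
    ∀ {st₁ n₁ st₂ n₂}, Reduces l st₁ n₁ → IsClosedConfig n₁ →
      Reduces l st₂ n₂ → IsClosedConfig n₂ → n₁ = n₂ := by
  intro n
  induction n with
  | zero => intro l hl; omega
  | succ n ih =>
    intro l hl hpos st₁ n₁ st₂ n₂ h1 hc1 h2 hc2
    rcases h1 with _ | @⟨s₁, hs₁, st₁', n₁, h1'⟩
    · -- n₁ = l
      rcases h2 with _ | @⟨s₂, hs₂, st₂', n₂, h2'⟩
      · rfl
      · exact absurd rfl (hc1 s₂ hs₂)
    · -- l = s₁.src
      generalize hE : s₁.src = L at h2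
      rcases h2 with _ | @⟨s₂, hs₂, st₂', n₂, h2'⟩
      · exact absurd hE (hc2 s₁ hs₁)
      · -- s₁.src = s₂.src
        have hsrc : s₁.src = s₂.src := hE
        have hl1 : s₁.tgt.length < n := by
          have := step_len s₁; omega
        have hl2 : s₂.tgt.length < n := by
          have e : s₂.src.length = s₁.src.length := by rw [hE]
          have := step_len s₂; omega
        have hpos1 : ∀ x ∈ s₁.src, 0 < x := hpos
        have hpos2 : ∀ x ∈ s₂.src, 0 < x := by rw [← hE]; exact hpos
        have hpt1 : ∀ x ∈ s₁.tgt, 0 < x := step_pos s₁ hpos1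
        have hpt2 : ∀ x ∈ s₂.tgt, 0 < x := step_pos s₂ hpos2
        have hconf : s₁.tgt = s₂.tgt ∨ ∃ u₁ u₂ : Step, u₁.Valid ∧ u₂.Valid ∧
            u₁.src = s₁.tgt ∧ u₂.src = s₂.tgt ∧ u₁.tgt = u₂.tgt := by
          rcases le_total s₁.pre.length s₂.pre.length with hle | hle
          · exact confl_core s₁ s₂ hs₁ hs₂ hsrc hpos1 hle
          · rcases confl_core s₂ s₁ hs₂ hs₁ hsrc.symm hpos2 hle with h | ⟨u₂, u₁, a2, a1, b2, b1, c⟩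
            · exact Or.inl h.symm
            · exact Or.inr ⟨u₁, u₂, a1, a2, b1, b2, c.symm⟩
        rcases hconf with e | ⟨u₁, u₂, hv1, hv2, hu1, hu2, hu⟩
        · rw [← e] at h2'
          exact ih s₁.tgt hl1 hpt1 h1' hc1 h2' hc2
        · obtain ⟨stc, nc, hrc, hcc⟩ := exists_closure u₁.tgt
          have r1 : Reduces s₁.tgt (u₁ :: stc) nc := by
            rw [← hu1]; exact Reduces.cons u₁ hv1 hrc
          have r2 : Reduces s₂.tgt (u₂ :: stc) nc := by
            rw [← hu2]; exact Reduces.cons u₂ hv2 (by rw [hu] at hrc; exact hrc)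
          have e1 : n₁ = nc := ih s₁.tgt hl1 hpt1 h1' hc1 r1 hcc
          have e2 : n₂ = nc := ih s₂.tgt hl2 hpt2 h2' hc2 r2 hcc
          rw [e1, e2]

lemma nf_unique {l : List ℝ} (hpos : ∀ x ∈ l, 0 < x) {st₁ n₁ st₂ n₂}
    (h1 : Reduces l st₁ n₁) (hc1 : IsClosedConfig n₁)
    (h2 : Reduces l st₂ n₂) (hc2 : IsClosedConfig n₂) : n₁ = n₂ :=
  nf_unique_aux (l.length + 1) l (Nat.lt_succ_self _) hpos h1 hc1 h2 hc2


lemma exists_cons3 {l : List ℝ} (h : 3 ≤ l.length) : ∃ a b c t, l = a :: b :: c :: t := by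
  rcases l with _ | ⟨a, _ | ⟨b, _ | ⟨c, t⟩⟩⟩ <;> simp at h ⊢

lemma exists_cons2 {l : List ℝ} (h : 2 ≤ l.length) : ∃ a b t, l = a :: b :: t := by
  rcases l with _ | ⟨a, _ | ⟨b, t⟩⟩ <;> simp at h ⊢

lemma exists_cons1 {l : List ℝ} (h : 1 ≤ l.length) : ∃ a t, l = a :: t := by
  rcases l with _ | ⟨a, t⟩ <;> simp at h ⊢

/-- red mass still to the right of position `x` in `mm` (to be absorbed). -/
noncomputable def rma (mm : List ℝ) (x : ℕ) : ℝ :=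
  if x % 2 = 0 then rs (mm.drop x) else os (mm.drop x)

/-- red mass already absorbed from the first `y` entries of `mp`. -/
noncomputable def cy (mp : List ℝ) (y : ℕ) : ℝ :=
  rs mp - (if y % 2 = 0 then rs (mp.drop y) else os (mp.drop y))

def Inv (mm mp : List ℝ) (l : List ℝ) : Prop :=
  ∃ x y v, x ≤ mm.length ∧ y ≤ mp.length ∧ (x + y) % 2 = 1 ∧
    l = mm.take x ++ v :: mp.drop y ∧
    0 ≤ rma mm x ∧ 0 ≤ cy mp y ∧
    (x % 2 = 0 → v ≤ 2 * (rma mm x + cy mp y))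

lemma inv_step (mm mp : List ℝ) (hcm : IsClosedConfig mm) (hcp : IsClosedConfig mp)
    (s : Step) (hv : s.Valid) (hpos : ∀ x ∈ s.src, 0 < x) (hI : Inv mm mp s.src) :
    Inv mm mp s.tgt := by
  obtain ⟨x, y, v, hx, hy, hpar, hl, hr0, hc0, hineq⟩ := hI
  have ha : 0 < s.a := hpos _ (by simp [Step.src])
  have hbpos : 0 < s.b := hpos _ (by simp [Step.src])
  have hcpos : 0 < s.c := hpos _ (by simp [Step.src])
  set p := s.pre.length with hp
  have hlenXx : (mm.take x).length = x := by rw [List.length_take]; omega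
  have hdropsrc : s.src.drop p = s.a :: s.b :: s.c :: s.post := by
    unfold Step.src; exact List.drop_left' rfl
  have htakesrc : s.src.take p = s.pre := by
    unfold Step.src; exact List.take_left' rfl
  have hsrclen : s.src.length = p + 3 + s.post.length := by
    simp [Step.src]; omega
  have hsrclen2 : s.src.length = x + 1 + (mp.length - y) := by
    rw [hl]; simp [hlenXx]; omega
  rcases (by omega : p + 3 ≤ x ∨ p + 2 = x ∨ p + 1 = x ∨ p = x ∨ x + 1 ≤ p) with
    hcase | hcase | hcase | hcase | hcase
  · -- triple strictly inside mm: contradiction with closedness of mm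
    exfalso
    have h3 : 3 ≤ (mm.drop p).length := by rw [List.length_drop]; omega
    obtain ⟨d0, d1, d2, d', hd⟩ := exists_cons3 h3
    have hdd : s.src.drop p = (mm.drop p).take (x - p) ++ (v :: mp.drop y) := by
      rw [hl, List.drop_append_of_le_length (by omega : p ≤ (mm.take x).length),
        List.drop_take]
    obtain ⟨k, hk⟩ : ∃ k, x - p = k + 1 + 1 + 1 := ⟨x - p - 3, by omega⟩
    rw [hdropsrc, hd, hk] at hdd
    simp only [List.take_succ_cons, List.cons_append, List.cons.injEq] at hdd
    obtain ⟨ea, eb, ec, _⟩ := hdd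
    have hd' : d' = mm.drop (p + 3) := by
      have h4 := congrArg (List.drop 3) hd
      rw [List.drop_drop] at h4
      rw [h4]
      rfl
    refine hcm ⟨mm.take p, s.a, s.b, s.c, mm.drop (p + 3)⟩ hv ?_
    show mm.take p ++ s.a :: s.b :: s.c :: mm.drop (p + 3) = mm
    rw [ea, eb, ec, ← hd', ← hd, List.take_append_drop]
  · -- middle is the last element of the mm-part
    have h2 : 2 ≤ (mm.drop p).length := by rw [List.length_drop]; omega
    obtain ⟨d0, d1, d', hd⟩ := exists_cons2 h2
    have hdd : s.src.drop p = (mm.drop p).take (x - p) ++ (v :: mp.drop y) := by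
      rw [hl, List.drop_append_of_le_length (by omega : p ≤ (mm.take x).length),
        List.drop_take]
    have hk : x - p = 0 + 1 + 1 := by omega
    rw [hdropsrc, hd, hk] at hdd
    simp only [List.take_succ_cons, List.take_zero, List.cons_append, List.nil_append,
      List.cons.injEq] at hdd
    obtain ⟨ea, eb, ec, epost⟩ := hdd
    have hd' : d' = mm.drop x := by
      have h4 := congrArg (List.drop 2) hd
      rw [List.drop_drop] at h4
      rw [← hcase, h4]
      rfl
    have hdropx2 : mm.drop (x - 2) = s.a :: s.b :: mm.drop x := by
      rw [(by omega : x - 2 = p), hd, ← ea, ← eb, ← hd']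
    have hpre : s.pre = mm.take (x - 2) := by
      rw [(by omega : x - 2 = p), ← htakesrc, hl,
        List.take_append_of_le_length (by omega : p ≤ (mm.take x).length),
        List.take_take, min_eq_left (by omega : p ≤ x)]
    refine ⟨x - 2, y, s.a + s.b + s.c, by omega, hy, by omega, ?_, ?_, hc0, ?_⟩
    · unfold Step.tgt
      rw [hpre, ← epost, ec]
    · unfold rma at hr0 ⊢
      rcases Nat.mod_two_eq_zero_or_one x with h | h
      · rw [if_pos h] at hr0
        rw [if_pos (by omega : (x - 2) % 2 = 0), hdropx2]
        simp only [rs_cons, os_cons]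
        linarith
      · rw [if_neg (by omega : ¬ x % 2 = 0)] at hr0
        rw [if_neg (by omega : ¬ (x - 2) % 2 = 0), hdropx2]
        simp only [rs_cons, os_cons]
        linarith
    · intro hx2
      have hxe : x % 2 = 0 := by omega
      have hiv := hineq hxe
      unfold rma at hiv ⊢
      rw [if_pos hxe] at hiv
      rw [if_pos (by omega : (x - 2) % 2 = 0), hdropx2]
      simp only [rs_cons, os_cons]
      rw [← ec] at hiv
      have hba := hv.1
      linarith
  · -- middle is v itself
    have h1 : 1 ≤ (mm.drop p).length := by rw [List.length_drop]; omega
    obtain ⟨d0, d', hd⟩ := exists_cons1 h1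
    have hdd : s.src.drop p = (mm.drop p).take (x - p) ++ (v :: mp.drop y) := by
      rw [hl, List.drop_append_of_le_length (by omega : p ≤ (mm.take x).length),
        List.drop_take]
    have hk : x - p = 0 + 1 := by omega
    rw [hdropsrc, hd, hk] at hdd
    simp only [List.take_succ_cons, List.take_zero, List.cons_append, List.nil_append,
      List.cons.injEq] at hdd
    obtain ⟨ea, eb, erest⟩ := hdd
    -- erest : s.c :: s.post = mp.drop y
    have hylt : y < mp.length := by
      have h4 := congrArg List.length erest
      simp at h4
      omega
    have epost : s.post = mp.drop (y + 1) := by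
      have h4 := congrArg (List.drop 1) erest
      rw [List.drop_drop] at h4
      rw [← h4]
      rfl
    have hdropy : mp.drop y = s.c :: mp.drop (y + 1) := by
      rw [← erest, epost]
    have hd' : d' = mm.drop x := by
      have h4 := congrArg (List.drop 1) hd
      rw [List.drop_drop] at h4
      rw [← hcase, h4]
      rfl
    have hdropx1 : mm.drop (x - 1) = s.a :: mm.drop x := by
      rw [(by omega : x - 1 = p), hd, ← ea, ← hd']
    have hpre : s.pre = mm.take (x - 1) := by
      rw [(by omega : x - 1 = p), ← htakesrc, hl,
        List.take_append_of_le_length (by omega : p ≤ (mm.take x).length),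
        List.take_take, min_eq_left (by omega : p ≤ x)]
    refine ⟨x - 1, y + 1, s.a + s.b + s.c, by omega, by omega, by omega, ?_, ?_, ?_, ?_⟩
    · unfold Step.tgt
      rw [hpre, epost]
    · unfold rma at hr0 ⊢
      rcases Nat.mod_two_eq_zero_or_one x with h | h
      · rw [if_pos h] at hr0
        rw [if_neg (by omega : ¬ (x - 1) % 2 = 0), hdropx1]
        simp only [rs_cons, os_cons]
        linarith
      · rw [if_neg (by omega : ¬ x % 2 = 0)] at hr0
        rw [if_pos (by omega : (x - 1) % 2 = 0), hdropx1]
        simp only [rs_cons, os_cons]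
        linarith
    · unfold cy at hc0 ⊢
      rcases Nat.mod_two_eq_zero_or_one y with h | h
      · rw [if_pos h, hdropy] at hc0
        rw [if_neg (by omega : ¬ (y + 1) % 2 = 0)]
        simp only [rs_cons, os_cons] at hc0
        linarith
      · rw [if_neg (by omega : ¬ y % 2 = 0), hdropy] at hc0
        rw [if_pos (by omega : (y + 1) % 2 = 0)]
        simp only [rs_cons, os_cons] at hc0
        exact hc0
    · intro hx1
      have hxo : x % 2 = 1 := by omega
      have hye : y % 2 = 0 := by omega
      unfold rma cy
      rw [if_pos (by omega : (x - 1) % 2 = 0), hdropx1,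
        if_neg (by omega : ¬ (y + 1) % 2 = 0)]
      simp only [rs_cons, os_cons]
      unfold rma at hr0
      unfold cy at hc0
      rw [if_neg (by omega : ¬ x % 2 = 0)] at hr0
      rw [if_pos hye, hdropy] at hc0
      simp only [rs_cons, os_cons] at hc0
      have hba := hv.1
      linarith
  · -- middle is the head of the mp-part
    have e : (mm.take x ++ v :: mp.drop y).drop p = v :: mp.drop y := by
      rw [hcase]; exact List.drop_left' hlenXx
    have hdd : v :: mp.drop y = s.a :: s.b :: s.c :: s.post := by
      rw [← e, ← hl, hdropsrc]
    simp only [List.cons.injEq] at hdd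
    obtain ⟨ea, erest⟩ := hdd
    -- erest : mp.drop y = s.b :: s.c :: s.post
    have hylt : y + 2 ≤ mp.length := by
      have h4 := congrArg List.length erest
      simp at h4
      omega
    have epost : s.post = mp.drop (y + 2) := by
      have h4 := congrArg (List.drop 2) erest
      rw [List.drop_drop] at h4
      rw [h4]
      rfl
    have hdropy2 : mp.drop y = s.b :: s.c :: mp.drop (y + 2) := by
      rw [erest, epost]
    have hpre : s.pre = mm.take x := by
      rw [← htakesrc, hl, hcase, List.take_left' hlenXx]
    refine ⟨x, y + 2, s.a + s.b + s.c, hx, by omega, by omega, ?_, hr0, ?_, ?_⟩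
    · unfold Step.tgt
      rw [hpre, epost]
    · unfold cy at hc0 ⊢
      rcases Nat.mod_two_eq_zero_or_one y with h | h
      · rw [if_pos h, hdropy2] at hc0
        rw [if_pos (by omega : (y + 2) % 2 = 0)]
        simp only [rs_cons, os_cons] at hc0
        linarith
      · rw [if_neg (by omega : ¬ y % 2 = 0), hdropy2] at hc0
        rw [if_neg (by omega : ¬ (y + 2) % 2 = 0)]
        simp only [rs_cons, os_cons] at hc0
        linarith
    · intro hxe
      have hyo : y % 2 = 1 := by omega
      have hiv := hineq hxe
      unfold rma cy at hiv ⊢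
      rw [if_neg (by omega : ¬ y % 2 = 0), hdropy2] at hiv
      rw [if_neg (by omega : ¬ (y + 2) % 2 = 0), if_pos hxe]
      rw [if_pos hxe] at hiv
      simp only [rs_cons, os_cons] at hiv ⊢
      rw [ea] at hiv
      have hbc := hv.2
      linarith
  · -- triple strictly inside mp: contradiction with closedness of mp
    exfalso
    obtain ⟨k, hk⟩ : ∃ k, p = x + 1 + k := ⟨p - x - 1, by omega⟩
    have e1 : mm.take x ++ v :: mp.drop y = (mm.take x ++ [v]) ++ mp.drop y := by simp
    have e3 : (mm.take x ++ [v]).length + k = p := by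
      simp [hlenXx]; omega
    have hdd : s.a :: s.b :: s.c :: s.post = mp.drop (y + k) := by
      rw [← hdropsrc, hl, e1, ← e3, List.drop_append, List.drop_drop]
      simp [List.drop_eq_nil_of_le]
    refine hcp ⟨mp.take (y + k), s.a, s.b, s.c, s.post⟩ hv ?_
    show mp.take (y + k) ++ s.a :: s.b :: s.c :: s.post = mp
    rw [hdd, List.take_append_drop]

lemma inv_reduces {mm mp : List ℝ} (hcm : IsClosedConfig mm) (hcp : IsClosedConfig mp)
    {l m : List ℝ} {st : List Step} (h : Reduces l st m) (hpos : ∀ x ∈ l, 0 < x)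
    (hI : Inv mm mp l) : Inv mm mp m := by
  induction h with
  | nil => exact hI
  | cons s hs h ih => exact ih (step_pos s hpos) (inv_step _ _ hcm hcp s hs hpos hI)

lemma inv_init (mm mp : List ℝ) (b : ℝ) (hlen : mm.length % 2 = 1) :
    Inv mm mp (mm ++ b :: mp) := by
  refine ⟨mm.length, 0, b, le_refl _, Nat.zero_le _, by omega, ?_, ?_, ?_, ?_⟩
  · rw [List.take_length, List.drop_zero]
  · unfold rma
    rw [List.drop_length]
    split <;> simp
  · unfold cy
    rw [List.drop_zero, if_pos rfl]
    simp
  · intro h0; omega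

lemma inv_final {mm mp m : List ℝ} (hposm : ∀ x ∈ mm, 0 ≤ x) (hposp : ∀ x ∈ mp, 0 ≤ x)
    (hI : Inv mm mp m) : redSum m ≤ 2 * redSum mm + 2 * redSum mp := by
  obtain ⟨x, y, v, hx, hy, hpar, hl, hr0, hc0, hineq⟩ := hI
  rw [redSum_eq_rs, redSum_eq_rs, redSum_eq_rs, hl]
  have hlen : (mm.take x).length = x := by rw [List.length_take]; omega
  have hm1 := (rs_os_append (mm.take x) (v :: mp.drop y)).1
  have hm2 := (rs_os_append (mm.take x) (mm.drop x)).1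
  rw [List.take_append_drop] at hm2
  have hA := rs_os_nonneg (mm.take x) (fun z hz => hposm z (List.take_subset _ _ hz))
  have hD := rs_os_nonneg (mm.drop x) (fun z hz => hposm z (List.drop_subset _ _ hz))
  have hE := rs_os_nonneg (mp.drop y) (fun z hz => hposp z (List.drop_subset _ _ hz))
  have hRp := rs_os_nonneg mp hposp
  rw [hm1, hlen]
  unfold cy at hc0
  unfold rma cy at hineq
  rcases Nat.mod_two_eq_zero_or_one x with h | h
  · have hyod : ¬ y % 2 = 0 := by omega
    have hiv := hineq h
    rw [if_pos h, if_neg hyod] at hiv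
    rw [if_pos h]
    rw [hlen, if_pos h] at hm2
    simp only [rs_cons]
    linarith [hA.1, hD.1, hE.2, hRp.1]
  · have hye : y % 2 = 0 := by omega
    rw [if_neg (by omega : ¬ x % 2 = 0)]
    rw [hlen, if_neg (by omega : ¬ x % 2 = 0)] at hm2
    rw [if_pos hye] at hc0
    simp only [os_cons]
    linarith [hA.1, hD.2, hRp.1, hE.1]

end RedGlue

/-- If `C₋`, `C₊` are red-ended coloured-intervals and `B` is a blue
interval, then the red-content of the closure of `C₋ + B + C₊` satisfies
`r(C₋ + B + C₊) ≤ 2·r(C₋) + 2·r(C₊)`. (The closures are obtained by arbitrary complete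
sequences of recolourings.) -/
theorem redContent_glue_le_two_mul
    (lm lp : List ℝ) (b : ℝ)
    (hoddm : lm.length % 2 = 1) (hoddp : lp.length % 2 = 1)
    (hposm : ∀ x ∈ lm, 0 < x) (hposp : ∀ x ∈ lp, 0 < x) (hb : 0 < b)
    (hnd : Nondegenerate (lm ++ b :: lp))
    (sm : List Step) (mm : List ℝ) (hm : Reduces lm sm mm) (hcm : IsClosedConfig mm)
    (sp : List Step) (mp : List ℝ) (hp : Reduces lp sp mp) (hcp : IsClosedConfig mp)
    (s : List Step) (m : List ℝ) (h : Reduces (lm ++ b :: lp) s m)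
    (hc : IsClosedConfig m) :
    redSum m ≤ 2 * redSum mm + 2 * redSum mp := by
  have hposl : ∀ x ∈ lm ++ b :: lp, 0 < x := by
    intro x hx
    rcases List.mem_append.1 hx with h' | h'
    · exact hposm x h'
    · rcases List.mem_cons.1 h' with h' | h'
      · exact h' ▸ hb
      · exact hposp x h'
  obtain ⟨st1, h1⟩ := RedGlue.reduces_append [] (b :: lp) hm
  simp only [List.nil_append] at h1
  obtain ⟨st2, h2⟩ := RedGlue.reduces_append (mm ++ [b]) [] hp
  simp only [List.append_nil, List.append_assoc, List.singleton_append] at h2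
  have h12 := RedGlue.reduces_trans h1 h2
  obtain ⟨st3, m', h3, hcm'⟩ := RedGlue.exists_closure (mm ++ b :: mp)
  have h13 := RedGlue.reduces_trans h12 h3
  have hmeq : m = m' := RedGlue.nf_unique hposl h hc h13 hcm'
  have hposmm : ∀ x ∈ mm, 0 < x := RedGlue.reduces_pos hm hposm
  have hposmp : ∀ x ∈ mp, 0 < x := RedGlue.reduces_pos hp hposp
  have hoddmm : mm.length % 2 = 1 := by
    have := RedGlue.reduces_length hm; omega
  have hposglue : ∀ x ∈ mm ++ b :: mp, 0 < x := by
    intro x hx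
    rcases List.mem_append.1 hx with h' | h'
    · exact hposmm x h'
    · rcases List.mem_cons.1 h' with h' | h'
      · exact h' ▸ hb
      · exact hposmp x h'
  have hInv : RedGlue.Inv mm mp m' :=
    RedGlue.inv_reduces hcm hcp h3 hposglue (RedGlue.inv_init mm mp b hoddmm)
  rw [hmeq]
  exact RedGlue.inv_final (fun z hz => (hposmm z hz).le) (fun z hz => (hposmp z hz).le) hInv
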